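/- There exists an atomic Puiseux monoid M such that for every x ∈ M, the cardinality of the set of lengths L(x) is either 1 or infinite, and both values occur; in particular there exists a completely non-half-factorial atomic Puiseux monoid (every nonzero non-atom has infinite set of lengths). -/

import Mathlib

open scoped BigOperators

/-- A Puiseux monoid: an additive submonoid of ℚ consisting of nonnegative elements. -/
def IsPuiseux (M : AddSubmonoid ℚ) : Prop := ∀ x ∈ M, (0:ℚ) ≤ x

/-- `a` is an atom of the submonoid `S`. -/
def IsAtomOf {α : Type*} [AddCommMonoid α] (S : AddSubmonoid α) (a : α) : Prop :=
  a ∈ S ∧ a ≠ 0 ∧ ∀ u v : α, u ∈ S → v ∈ S → a = u + v → u = 0 ∨ v = 0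

/-- `x` has a factorization of length `n` into atoms of `S`. -/
def IsLengthOf {α : Type*} [AddCommMonoid α] (S : AddSubmonoid α) (x : α) (n : ℕ) : Prop :=
  ∃ f : Fin n → α, (∀ i, IsAtomOf S (f i)) ∧ x = ∑ i, f i

/-- The set of lengths of `x` in `S`. -/
def lengthsOf {α : Type*} [AddCommMonoid α] (S : AddSubmonoid α) (x : α) : Set ℕ :=
  {n | IsLengthOf S x n}

/-- `S` is atomic: every nonzero element is a finite sum of atoms. -/
def AtomicM {α : Type*} [AddCommMonoid α] (S : AddSubmonoid α) : Prop :=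
  ∀ x ∈ S, x ≠ 0 → ∃ n : ℕ, IsLengthOf S x n

/-- The system of sets of lengths of `M`. -/
def systemOfLengths (M : AddSubmonoid ℚ) : Set (Set ℕ) :=
  {S | ∃ x ∈ M, lengthsOf M x = S}

/-- The elementary Puiseux monoid ⟨1/p : p prime⟩. -/
def elemPM : AddSubmonoid ℚ :=
  AddSubmonoid.closure {q : ℚ | ∃ p : ℕ, p.Prime ∧ q = 1 / p}

/-! ### Auxiliary development -/

/-- sum of reciprocals of a multiset of naturals -/
def msum (s : Multiset ℕ) : ℚ := (s.map (fun p : ℕ => 1 / (p : ℚ))).sum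

@[simp] lemma msum_zero : msum 0 = 0 := rfl

@[simp] lemma msum_cons (a : ℕ) (s : Multiset ℕ) :
    msum (a ::ₘ s) = 1 / (a : ℚ) + msum s := by
  simp [msum]

@[simp] lemma msum_add (s t : Multiset ℕ) : msum (s + t) = msum s + msum t := by
  simp [msum]

@[simp] lemma msum_replicate (n a : ℕ) : msum (Multiset.replicate n a) = n * (1 / (a:ℚ)) := by
  simp [msum, Multiset.map_replicate, Multiset.sum_replicate, nsmul_eq_mul]

@[simp] lemma msum_singleton (a : ℕ) : msum {a} = 1 / (a : ℚ) := by
  simp [msum]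

lemma msum_nonneg {s : Multiset ℕ} : 0 ≤ msum s := by
  induction s using Multiset.induction with
  | empty => simp
  | cons a s ih =>
      simp only [msum_cons]
      positivity

/-- `s` is a representation of `x` as sum of prime reciprocals. -/
def isRep (s : Multiset ℕ) (x : ℚ) : Prop := (∀ p ∈ s, p.Prime) ∧ x = msum s

lemma msum_pos' {s : Multiset ℕ} (hs : ∀ p ∈ s, p.Prime) (hne : s ≠ 0) : 0 < msum s := by
  obtain ⟨a, ha⟩ := Multiset.exists_mem_of_ne_zero hne
  obtain ⟨t, rfl⟩ := Multiset.exists_cons_of_mem ha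
  have hap : a.Prime := hs a (Multiset.mem_cons_self a t)
  have h1 : (0:ℚ) < 1 / (a : ℚ) := by
    have : (0:ℚ) < a := by exact_mod_cast hap.pos
    positivity
  have h2 := msum_nonneg (s := t)
  simp only [msum_cons]
  linarith

lemma rep_mem {s : Multiset ℕ} (hs : ∀ p ∈ s, p.Prime) : msum s ∈ elemPM := by
  induction s using Multiset.induction with
  | empty => simpa using zero_mem _
  | cons a t ih =>
      simp only [msum_cons]
      exact add_mem (AddSubmonoid.subset_closure ⟨a, hs a (Multiset.mem_cons_self a t), rfl⟩)
        (ih fun p hp => hs p (Multiset.mem_cons_of_mem hp))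

lemma mem_elemPM_iff {x : ℚ} : x ∈ elemPM ↔ ∃ s : Multiset ℕ, isRep s x := by
  constructor
  · intro hx
    induction hx using AddSubmonoid.closure_induction with
    | mem y hy =>
        obtain ⟨p, hp, rfl⟩ := hy
        refine ⟨{p}, fun q hq => ?_, by simp⟩
        rw [Multiset.mem_singleton] at hq
        exact hq ▸ hp
    | zero => exact ⟨0, fun p hp => (by simp at hp), by simp⟩
    | add y z hy hz ihy ihz =>
        obtain ⟨s, hs, rfl⟩ := ihy
        obtain ⟨t, ht, rfl⟩ := ihz
        exact ⟨s + t, fun p hp => (Multiset.mem_add.mp hp).elim (hs p) (ht p), by simp⟩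
  · rintro ⟨s, hs, rfl⟩
    exact rep_mem hs

lemma elemPM_nonneg {x : ℚ} (hx : x ∈ elemPM) : 0 ≤ x := by
  obtain ⟨s, _, rfl⟩ := mem_elemPM_iff.mp hx
  exact msum_nonneg

/-- integer version of `D * msum s` -/
def nsum (D : ℕ) (s : Multiset ℕ) : ℕ := (s.map fun p => D / p).sum

lemma nsum_cast {D : ℕ} {s : Multiset ℕ} (hp : ∀ p ∈ s, p.Prime) (hd : ∀ p ∈ s, p ∣ D) :
    (nsum D s : ℚ) = (D : ℚ) * msum s := by
  induction s using Multiset.induction with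
  | empty => simp [nsum]
  | cons a t ih =>
      have ha : a.Prime := hp a (Multiset.mem_cons_self a t)
      have hda : a ∣ D := hd a (Multiset.mem_cons_self a t)
      have hcast : ((D / a : ℕ) : ℚ) = (D : ℚ) / (a : ℚ) :=
        Nat.cast_div hda (by exact_mod_cast ha.ne_zero)
      have iht := ih (fun p hp' => hp p (Multiset.mem_cons_of_mem hp'))
        (fun p hp' => hd p (Multiset.mem_cons_of_mem hp'))
      simp only [nsum, Multiset.map_cons, Multiset.sum_cons, Nat.cast_add, msum_cons] at *
      rw [hcast, iht]
      ring

lemma nsum_mod {D q : ℕ} {s : Multiset ℕ} (hdq : ∀ p ∈ s, p ≠ q → q ∣ D / p) :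
    nsum D s ≡ s.count q * (D / q) [MOD q] := by
  induction s using Multiset.induction with
  | empty => simp [nsum, Nat.ModEq.refl]
  | cons a t ih =>
      have iht := ih (fun p hp' hne => hdq p (Multiset.mem_cons_of_mem hp') hne)
      simp only [nsum, Multiset.map_cons, Multiset.sum_cons] at *
      by_cases ha : a = q
      · subst ha
        rw [Multiset.count_cons_self, add_mul, one_mul,
          add_comm (Multiset.count a t * (D / a)) (D / a)]
        exact Nat.ModEq.add_left _ iht
      · rw [Multiset.count_cons_of_ne (fun h => ha h.symm)]
        have h0 : q ∣ D / a := hdq a (Multiset.mem_cons_self a t) ha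
        calc D / a + nsum D t ≡ 0 + nsum D t [MOD q] :=
              Nat.ModEq.add_right _ ((Nat.modEq_zero_iff_dvd).mpr h0)
          _ = nsum D t := by rw [zero_add]
          _ ≡ Multiset.count q t * (D / q) [MOD q] := iht

/-- Key congruence lemma: two representations of the same rational have
congruent multiplicities modulo each prime. -/
lemma key {s t : Multiset ℕ} (hs : ∀ p ∈ s, p.Prime) (ht : ∀ p ∈ t, p.Prime)
    (h : msum s = msum t) {q : ℕ} (hq : q.Prime) :
    s.count q ≡ t.count q [MOD q] := by
  classical
  set F : Finset ℕ := (s + t).toFinset ∪ {q} with hF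
  have hFprime : ∀ p ∈ F, p.Prime := by
    intro p hp
    rcases Finset.mem_union.mp hp with h' | h'
    · rcases Multiset.mem_add.mp (Multiset.mem_toFinset.mp h') with h'' | h''
      · exact hs p h''
      · exact ht p h''
    · rw [Finset.mem_singleton.mp h']; exact hq
  set D : ℕ := F.prod id with hD
  have hqF : q ∈ F := Finset.mem_union_right _ (Finset.mem_singleton_self q)
  have hdvd : ∀ p ∈ F, p ∣ D := fun p hp => Finset.dvd_prod_of_mem id hp
  have hmemF : ∀ p, (p ∈ s ∨ p ∈ t) → p ∈ F := by
    intro p hp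
    exact Finset.mem_union_left _ (Multiset.mem_toFinset.mpr (Multiset.mem_add.mpr hp))
  have hDp : ∀ p ∈ F, D = p * (F.erase p).prod id := by
    intro p hp
    rw [hD, ← Finset.mul_prod_erase F id hp]
    rfl
  have hdvd_div : ∀ p ∈ F, p ≠ q → q ∣ D / p := by
    intro p hp hne
    rw [hDp p hp, Nat.mul_div_cancel_left _ (hFprime p hp).pos]
    exact Finset.dvd_prod_of_mem id (Finset.mem_erase.mpr ⟨Ne.symm hne, hqF⟩)
  have hDq : D / q = (F.erase q).prod id := by
    rw [hDp q hqF, Nat.mul_div_cancel_left _ hq.pos]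
  have hcop : q.Coprime (D / q) := by
    rw [hDq]
    refine Nat.Coprime.prod_right fun p hp => ?_
    have hpq : p ≠ q := (Finset.mem_erase.mp hp).1
    have hpF : p ∈ F := (Finset.mem_erase.mp hp).2
    exact (Nat.coprime_primes hq (hFprime p hpF)).mpr (Ne.symm hpq)
  have hs' : nsum D s = nsum D t := by
    have h1 := nsum_cast hs (fun p hp => hdvd p (hmemF p (Or.inl hp)))
    have h2 := nsum_cast ht (fun p hp => hdvd p (hmemF p (Or.inr hp)))
    have : (nsum D s : ℚ) = (nsum D t : ℚ) := by rw [h1, h2, h]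
    exact_mod_cast this
  have m1 : nsum D s ≡ s.count q * (D / q) [MOD q] :=
    nsum_mod (fun p hp hne => hdvd_div p (hmemF p (Or.inl hp)) hne)
  have m2 : nsum D t ≡ t.count q * (D / q) [MOD q] :=
    nsum_mod (fun p hp hne => hdvd_div p (hmemF p (Or.inr hp)) hne)
  exact Nat.ModEq.cancel_right_of_coprime hcop (m1.symm.trans (hs' ▸ m2))

/-- every prime reciprocal is an atom -/
lemma atom_of_prime {p : ℕ} (hp : p.Prime) : IsAtomOf elemPM (1 / (p : ℚ)) := by
  have hp0 : (0:ℚ) < (p:ℚ) := by exact_mod_cast hp.pos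
  refine ⟨AddSubmonoid.subset_closure ⟨p, hp, rfl⟩, by positivity, ?_⟩
  intro u v hu hv huv
  obtain ⟨su, hsu, rfl⟩ := mem_elemPM_iff.mp hu
  obtain ⟨sv, hsv, rfl⟩ := mem_elemPM_iff.mp hv
  by_contra hcon
  push_neg at hcon
  obtain ⟨hu0, hv0⟩ := hcon
  have hsu0 : su ≠ 0 := fun h => hu0 (by simp [h])
  have hsv0 : sv ≠ 0 := fun h => hv0 (by simp [h])
  set s := su + sv with hsdef
  have hsprime : ∀ r ∈ s, r.Prime := fun r hr =>
    (Multiset.mem_add.mp hr).elim (hsu r) (hsv r)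
  have hsum : msum s = msum {p} := by
    simp only [hsdef, msum_add, msum_singleton]
    exact huv.symm
  -- counts: for q ≠ p, q ∣ count q s, and count q s / q ≥ 1 would make the sum ≥ 1
  have hcount : ∀ q, q.Prime → q ≠ p → s.count q = 0 := by
    intro q hq hqp
    have hk := key hsprime (fun r hr => by
      rw [Multiset.mem_singleton.mp hr]; exact hp) hsum hq
    have hcp : Multiset.count q {p} = 0 := by
      rw [Multiset.count_singleton]
      simp [hqp]
    rw [hcp] at hk
    have hdvd : q ∣ s.count q := (Nat.modEq_zero_iff_dvd).mp hk
    by_contra hne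
    have hge : q ≤ s.count q := Nat.le_of_dvd (Nat.pos_of_ne_zero hne) hdvd
    have hrep : Multiset.replicate q q ≤ s := Multiset.le_count_iff_replicate_le.mp hge
    have : msum (Multiset.replicate q q) ≤ msum s := by
      obtain ⟨w, hw⟩ := Multiset.le_iff_exists_add.mp hrep
      rw [hw, msum_add]
      have := msum_nonneg (s := w)
      linarith
    have h1 : msum (Multiset.replicate q q) = 1 := by
      rw [msum_replicate]
      have : (q:ℚ) ≠ 0 := by exact_mod_cast hq.ne_zero
      field_simp
    have h2 : msum s = 1 / (p:ℚ) := by rw [hsum, msum_singleton]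
    have h3 : (1:ℚ) / (p:ℚ) < 1 := by
      rw [div_lt_one hp0]
      exact_mod_cast hp.one_lt
    rw [h1, h2] at this
    linarith
  -- so s consists only of p's
  have hrep : s = Multiset.replicate (s.count p) p := by
    ext q
    rw [Multiset.count_replicate]
    by_cases hqp : q = p
    · rw [if_pos hqp.symm, hqp]
    · rw [if_neg (fun h => hqp h.symm)]
      by_cases hqs : q ∈ s
      · exact hcount q (hsprime q hqs) hqp
      · exact Multiset.count_eq_zero.mpr hqs
  have hk : (s.count p : ℚ) * (1 / (p:ℚ)) = 1 / (p:ℚ) := by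
    have := hsum
    rw [hrep] at this
    rw [msum_replicate] at this
    rw [this, msum_singleton]
  have hp0' : (1:ℚ) / (p:ℚ) ≠ 0 := by positivity
  have hc1 : (s.count p : ℚ) = 1 := by
    field_simp at hk
    exact_mod_cast hk
  have hc1' : s.count p = 1 := by exact_mod_cast hc1
  have hcard : Multiset.card s = 1 := by
    rw [hrep, Multiset.card_replicate, hc1']
  have : Multiset.card su + Multiset.card sv = 1 := by
    rw [← Multiset.card_add]; exact hcard
  rcases Nat.add_eq_one_iff.mp this with ⟨h1, _⟩ | ⟨_, h2⟩
  · exact hsu0 (Multiset.card_eq_zero.mp h1)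
  · exact hsv0 (Multiset.card_eq_zero.mp h2)

/-- every atom is a prime reciprocal -/
lemma prime_of_atom {a : ℚ} (ha : IsAtomOf elemPM a) : ∃ p : ℕ, p.Prime ∧ a = 1 / (p:ℚ) := by
  obtain ⟨hmem, hne, hatom⟩ := ha
  obtain ⟨s, hs, rfl⟩ := mem_elemPM_iff.mp hmem
  have hs0 : s ≠ 0 := fun h => hne (by simp [h])
  obtain ⟨p, hp⟩ := Multiset.exists_mem_of_ne_zero hs0
  obtain ⟨t, rfl⟩ := Multiset.exists_cons_of_mem hp
  have hpp : p.Prime := hs p (Multiset.mem_cons_self p t)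
  by_cases ht0 : t = 0
  · exact ⟨p, hpp, by simp [ht0]⟩
  · exfalso
    have htprime : ∀ r ∈ t, r.Prime := fun r hr => hs r (Multiset.mem_cons_of_mem hr)
    have h1 : (1:ℚ) / (p:ℚ) ∈ elemPM := AddSubmonoid.subset_closure ⟨p, hpp, rfl⟩
    have h2 : msum t ∈ elemPM := rep_mem htprime
    rcases hatom _ _ h1 h2 (msum_cons p t) with h | h
    · have hp0 : (0:ℚ) < (p:ℚ) := by exact_mod_cast hpp.pos
      have : (0:ℚ) < 1 / (p:ℚ) := by positivity
      exact absurd h (ne_of_gt this)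
    · exact absurd h (ne_of_gt (msum_pos' htprime ht0))

/-- lengths correspond to cardinalities of representations -/
lemma isLength_iff {x : ℚ} {n : ℕ} :
    IsLengthOf elemPM x n ↔ ∃ s : Multiset ℕ, (∀ p ∈ s, p.Prime) ∧ x = msum s ∧
      Multiset.card s = n := by
  constructor
  · rintro ⟨f, hf, rfl⟩
    choose p hp hfp using fun i => prime_of_atom (hf i)
    refine ⟨Multiset.map p Finset.univ.val, ?_, ?_, ?_⟩
    · intro q hq
      obtain ⟨i, _, rfl⟩ := Multiset.mem_map.mp hq
      exact hp i
    · rw [Finset.sum_congr rfl (fun i _ => hfp i)]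
      simp only [msum]
      rw [Multiset.map_map]
      rfl
    · rw [Multiset.card_map]
      simp
  · rintro ⟨s, hs, rfl, rfl⟩
    set l := s.toList with hl
    have hlen : l.length = Multiset.card s := Multiset.length_toList s
    have hcoe : (↑l : Multiset ℕ) = s := Multiset.coe_toList s
    refine ⟨fun i => 1 / ((l.get (Fin.cast hlen.symm i) : ℕ) : ℚ), fun i => ?_, ?_⟩
    · refine atom_of_prime (hs _ ?_)
      have hm : l.get (Fin.cast hlen.symm i) ∈ l := l.get_mem _
      exact Multiset.mem_toList.mp hm
    · have h1 : msum s = (l.map (fun p : ℕ => 1 / (p:ℚ))).sum := by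
        rw [← hcoe]
        simp [msum]
      have hmap : l.map (fun p : ℕ => 1 / (p:ℚ))
          = List.ofFn (fun i => 1 / ((l.get i : ℕ) : ℚ)) := by
        conv_lhs => rw [← List.ofFn_get l]
        rw [List.map_ofFn]
        rfl
      rw [h1, hmap, List.sum_ofFn]
      exact (Fin.sum_congr' (fun j => 1 / ((l.get j : ℕ) : ℚ)) hlen.symm).symm

lemma lengths_zero : lengthsOf elemPM (0:ℚ) = {0} := by
  ext n
  simp only [lengthsOf, Set.mem_setOf_eq, Set.mem_singleton_iff]
  constructor
  · rintro ⟨f, hf, hsum⟩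
    by_contra hn
    have hpos : ∀ i, 0 < f i := fun i =>
      lt_of_le_of_ne (elemPM_nonneg (hf i).1) (Ne.symm (hf i).2.1)
    have hlt : (0:ℚ) < ∑ i, f i := by
      refine Finset.sum_pos (fun i _ => hpos i) ?_
      rw [Finset.univ_nonempty_iff]
      exact Fin.pos_iff_nonempty.mp (Nat.pos_of_ne_zero hn)
    rw [← hsum] at hlt
    exact lt_irrefl 0 hlt
  · rintro rfl
    exact ⟨Fin.elim0, fun i => i.elim0, by simp⟩

lemma infinite_of_big_count {x : ℚ} {s : Multiset ℕ} (hs : ∀ p ∈ s, p.Prime) (hx : x = msum s)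
    {q : ℕ} (hq : q.Prime) (hcount : q ≤ s.count q) : (lengthsOf elemPM x).Infinite := by
  have hrep : Multiset.replicate q q ≤ s := Multiset.le_count_iff_replicate_le.mp hcount
  obtain ⟨u, hu⟩ := Multiset.le_iff_exists_add.mp hrep
  have huprime : ∀ p ∈ u, p.Prime := fun p hp =>
    hs p (by rw [hu]; exact Multiset.mem_add.mpr (Or.inr hp))
  have hmem : ∀ r : ℕ, r.Prime → (Multiset.card u + r) ∈ lengthsOf elemPM x := by
    intro r hr
    refine isLength_iff.mpr ⟨Multiset.replicate r r + u, ?_, ?_, ?_⟩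
    · intro p hp
      rcases Multiset.mem_add.mp hp with h | h
      · rw [Multiset.eq_of_mem_replicate h]; exact hr
      · exact huprime p h
    · rw [hx, hu, msum_add, msum_add, msum_replicate, msum_replicate]
      have hrq : (r:ℚ) ≠ 0 := by exact_mod_cast hr.ne_zero
      have hqq : (q:ℚ) ≠ 0 := by exact_mod_cast hq.ne_zero
      field_simp
    · rw [Multiset.card_add, Multiset.card_replicate, add_comm]
  have hsub : ((fun r => Multiset.card u + r) '' {r | r.Prime}) ⊆ lengthsOf elemPM x := by
    rintro n ⟨r, hr, rfl⟩
    exact hmem r hr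
  exact Set.Infinite.mono hsub
    (Set.Infinite.image (fun a _ b _ h => by omega) Nat.infinite_setOf_prime)

theorem stmt8 :
    ∃ M : AddSubmonoid ℚ, IsPuiseux M ∧ AtomicM M ∧
      (∀ x ∈ M, (lengthsOf M x).ncard = 1 ∨ (lengthsOf M x).Infinite) ∧
      (∃ x ∈ M, (lengthsOf M x).ncard = 1) ∧
      (∃ x ∈ M, (lengthsOf M x).Infinite) := by
  have h2 : Nat.Prime 2 := Nat.prime_two
  have hrep1 : (1:ℚ) = msum (Multiset.replicate 2 2) := by
    rw [msum_replicate]; norm_num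
  have hrep1' : ∀ p ∈ Multiset.replicate 2 2, Nat.Prime p := fun p hp => by
    rw [Multiset.eq_of_mem_replicate hp]; exact h2
  refine ⟨elemPM, fun x hx => elemPM_nonneg hx, ?_, ?_, ?_, ?_⟩
  · intro x hx _
    obtain ⟨s, hs, rfl⟩ := mem_elemPM_iff.mp hx
    exact ⟨Multiset.card s, isLength_iff.mpr ⟨s, hs, rfl, rfl⟩⟩
  · intro x hx
    by_cases hx0 : x = 0
    · left
      rw [hx0, lengths_zero]
      exact Set.ncard_singleton 0
    · by_cases H : ∃ s : Multiset ℕ, (∀ p ∈ s, p.Prime) ∧ x = msum s ∧ ∃ q ∈ s, q ≤ s.count q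
      · right
        obtain ⟨s, hs, hxs, q, hqs, hcount⟩ := H
        exact infinite_of_big_count hs hxs (hs q hqs) hcount
      · left
        push_neg at H
        obtain ⟨s0, hs0, hxs0⟩ := mem_elemPM_iff.mp hx
        have huniq : ∀ t : Multiset ℕ, (∀ p ∈ t, p.Prime) → x = msum t → t = s0 := by
          intro t ht hxt
          ext q
          by_cases hq : q.Prime
          · have hmod := key ht hs0 (hxt.symm.trans hxs0) hq
            have h1 : t.count q < q := by
              rcases Nat.lt_or_ge (t.count q) q with h | h
              · exact h
              · exact absurd (H t ht hxt q
                  (Multiset.count_pos.mp (lt_of_lt_of_le hq.pos h))) (not_lt.mpr h)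
            have h2' : s0.count q < q := by
              rcases Nat.lt_or_ge (s0.count q) q with h | h
              · exact h
              · exact absurd (H s0 hs0 hxs0 q
                  (Multiset.count_pos.mp (lt_of_lt_of_le hq.pos h))) (not_lt.mpr h)
            have := hmod
            unfold Nat.ModEq at this
            rwa [Nat.mod_eq_of_lt h1, Nat.mod_eq_of_lt h2'] at this
          · rw [Multiset.count_eq_zero.mpr (fun h => hq (ht q h)),
              Multiset.count_eq_zero.mpr (fun h => hq (hs0 q h))]
        have hL : lengthsOf elemPM x = {Multiset.card s0} := by
          ext n
          simp only [lengthsOf, Set.mem_setOf_eq, Set.mem_singleton_iff]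
          constructor
          · intro hn
            obtain ⟨t, ht, hxt, rfl⟩ := isLength_iff.mp hn
            rw [huniq t ht hxt]
          · rintro rfl
            exact isLength_iff.mpr ⟨s0, hs0, hxs0, rfl⟩
        rw [hL]
        exact Set.ncard_singleton _
  · exact ⟨0, zero_mem _, by rw [lengths_zero]; exact Set.ncard_singleton 0⟩
  · refine ⟨1, ?_, ?_⟩
    · rw [hrep1]
      exact rep_mem hrep1'
    · exact infinite_of_big_count hrep1' hrep1 h2 (by simp)
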